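/- Coarea formula for symmetric forms: Let J be a symmetric nonnegative measure on E × E and K a nonnegative measure on E, and let f ≥ 0 be measurable with π(f) = 1. Setting A_γ = {f > γ}, one has (1/2)∬ J(dx,dy)|f(y) − f(x)| + ∫ f dK = ∫₀^∞ [J(A_γ × A_γᶜ) + K(A_γ)] dγ. Consequently, (1/2)∬ J(dx,dy)|f(y) − f(x)| + K(f) ≥ h, where h = inf_{π(A)>0} [J(A × Aᶜ) + K(A)]/π(A). -/

import Mathlib

open MeasureTheory Set ENNReal

private lemma sect_measurable {Ω : Type*} [MeasurableSpace Ω] (J : Measure Ω) {u v : Ω → ℝ}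
    (hu : Measurable u) (hv : Measurable v)
    {Q : Set Ω} (hQ : MeasurableSet Q) (hfin : J Q ≠ ⊤) :
    Measurable (fun γ : ℝ => J ({p | u p ≤ γ ∧ γ < v p} ∩ Q)) := by
  have h1 : Monotone (fun γ : ℝ => J ({p | u p ≤ γ} ∩ Q)) := fun a b hab =>
    measure_mono (fun p hp => ⟨hp.1.trans hab, hp.2⟩)
  have h2 : Monotone (fun γ : ℝ => J ({p | u p ≤ γ ∧ v p ≤ γ} ∩ Q)) := fun a b hab =>
    measure_mono (fun p hp => ⟨⟨hp.1.1.trans hab, hp.1.2.trans hab⟩, hp.2⟩)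
  have heq : (fun γ : ℝ => J ({p | u p ≤ γ ∧ γ < v p} ∩ Q))
      = fun γ => J ({p | u p ≤ γ} ∩ Q) - J ({p | u p ≤ γ ∧ v p ≤ γ} ∩ Q) := by
    funext γ
    have hset : {p | u p ≤ γ ∧ γ < v p} ∩ Q
        = ({p | u p ≤ γ} ∩ Q) \ ({p | u p ≤ γ ∧ v p ≤ γ} ∩ Q) := by
      ext p
      constructor
      · rintro ⟨⟨ha, hb⟩, hQp⟩
        exact ⟨⟨ha, hQp⟩, fun hc => absurd hc.1.2 (not_le.mpr hb)⟩
      · rintro ⟨⟨ha, hQp⟩, hc⟩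
        refine ⟨⟨ha, ?_⟩, hQp⟩
        by_contra hvc
        exact hc ⟨⟨ha, not_lt.mp hvc⟩, hQp⟩
    rw [hset]
    have hsub : ({p | u p ≤ γ ∧ v p ≤ γ} ∩ Q) ⊆ ({p | u p ≤ γ} ∩ Q) :=
      fun p hp => ⟨hp.1.1, hp.2⟩
    exact measure_diff hsub
      (((hu measurableSet_Iic).inter (hv measurableSet_Iic)).inter hQ).nullMeasurableSet
      (ne_top_of_le_ne_top hfin (measure_mono inter_subset_right))
  rw [heq]
  exact h1.measurable.sub h2.measurable

private lemma piece_eq {Ω : Type*} [MeasurableSpace Ω] (J : Measure Ω) {u v : Ω → ℝ}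
    (hu : Measurable u) (hv : Measurable v) (hu0 : ∀ p, 0 ≤ u p)
    {Q : Set Ω} (hQ : MeasurableSet Q) (hQD : ∀ p ∈ Q, u p < v p) (hfin : J Q ≠ ⊤)
    (c : ℝ) (hc : ∀ p ∈ Q, u p ≤ c) :
    ∫⁻ γ in Ioi (0:ℝ), J ({p | u p ≤ γ ∧ γ < v p} ∩ Q)
      = ∫⁻ p in Q, ENNReal.ofReal (v p - u p) ∂J := by
  set μ := J.restrict Q with hμ
  have hTmeas : ∀ γ : ℝ, MeasurableSet {p | u p ≤ γ ∧ γ < v p} := fun γ =>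
    (hu measurableSet_Iic).inter (hv measurableSet_Ioi)
  have hrw : ∀ γ : ℝ, J ({p | u p ≤ γ ∧ γ < v p} ∩ Q) = μ {p | u p ≤ γ ∧ γ < v p} :=
    fun γ => (Measure.restrict_apply (hTmeas γ)).symm
  have hvnn : 0 ≤ᵐ[μ] v := by
    filter_upwards [ae_restrict_mem hQ] with p hp
    exact (hu0 p).trans (hQD p hp).le
  have lcv := lintegral_eq_lintegral_meas_lt μ hvnn hv.aemeasurable
  have lcu := lintegral_eq_lintegral_meas_lt μ (ae_of_all _ hu0) hu.aemeasurable
  have hsplit : ∀ γ : ℝ, μ {p | γ < v p} = μ {p | γ < u p} + μ {p | u p ≤ γ ∧ γ < v p} := by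
    intro γ
    rw [hμ, Measure.restrict_apply (show MeasurableSet {p | γ < v p} from hv measurableSet_Ioi),
      Measure.restrict_apply (show MeasurableSet {p | γ < u p} from hu measurableSet_Ioi),
      Measure.restrict_apply (hTmeas γ)]
    have hunion : {p | γ < v p} ∩ Q
        = ({p | γ < u p} ∩ Q) ∪ ({p | u p ≤ γ ∧ γ < v p} ∩ Q) := by
      ext p
      constructor
      · rintro ⟨hpv, hpQ⟩
        rcases le_or_gt (u p) γ with hle | hlt
        · exact Or.inr ⟨⟨hle, hpv⟩, hpQ⟩
        · exact Or.inl ⟨hlt, hpQ⟩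
      · rintro (⟨hpu, hpQ⟩ | ⟨⟨_, hpv⟩, hpQ⟩)
        · exact ⟨hpu.trans (hQD p hpQ), hpQ⟩
        · exact ⟨hpv, hpQ⟩
    rw [hunion, measure_union ?_ ((hTmeas γ).inter hQ)]
    rw [Set.disjoint_left]
    rintro p ⟨hpu, _⟩ ⟨⟨hle, _⟩, _⟩
    exact absurd hpu (not_lt.mpr hle)
  have hmeasu : Measurable fun γ : ℝ => μ {p | γ < u p} :=
    Antitone.measurable (fun a b hab => measure_mono fun p hp => lt_of_le_of_lt hab hp)
  have hmeasT : Measurable fun γ : ℝ => μ {p | u p ≤ γ ∧ γ < v p} := by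
    have h := sect_measurable J hu hv hQ hfin
    have e : (fun γ : ℝ => μ {p | u p ≤ γ ∧ γ < v p})
        = fun γ => J ({p | u p ≤ γ ∧ γ < v p} ∩ Q) := funext fun γ => (hrw γ).symm
    rw [e]; exact h
  have hsum : ∫⁻ p, ENNReal.ofReal (v p) ∂μ
      = (∫⁻ p, ENNReal.ofReal (u p) ∂μ) + ∫⁻ p, ENNReal.ofReal (v p - u p) ∂μ := by
    rw [← lintegral_add_left hu.ennreal_ofReal fun p => ENNReal.ofReal (v p - u p)]
    apply lintegral_congr_ae
    filter_upwards [ae_restrict_mem hQ] with p hp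
    rw [← ENNReal.ofReal_add (hu0 p) (sub_nonneg.mpr (hQD p hp).le)]
    congr 1
    ring
  have hBfin : ∫⁻ p, ENNReal.ofReal (u p) ∂μ ≠ ⊤ := by
    have hBle : ∫⁻ p, ENNReal.ofReal (u p) ∂μ ≤ ENNReal.ofReal c * J Q := by
      calc ∫⁻ p, ENNReal.ofReal (u p) ∂μ ≤ ∫⁻ _, ENNReal.ofReal c ∂μ := by
            refine lintegral_mono_ae ?_
            filter_upwards [ae_restrict_mem hQ] with p hp
            exact ENNReal.ofReal_le_ofReal (hc p hp)
        _ = ENNReal.ofReal c * J Q := by rw [lintegral_const, hμ, Measure.restrict_apply_univ]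
    exact ne_top_of_le_ne_top (ENNReal.mul_ne_top ENNReal.ofReal_ne_top hfin) hBle
  have main : (∫⁻ p, ENNReal.ofReal (u p) ∂μ) + ∫⁻ γ in Ioi (0:ℝ), μ {p | u p ≤ γ ∧ γ < v p}
      = (∫⁻ p, ENNReal.ofReal (u p) ∂μ) + ∫⁻ p, ENNReal.ofReal (v p - u p) ∂μ := by
    calc (∫⁻ p, ENNReal.ofReal (u p) ∂μ) + ∫⁻ γ in Ioi (0:ℝ), μ {p | u p ≤ γ ∧ γ < v p}
        = (∫⁻ γ in Ioi (0:ℝ), μ {p | γ < u p})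
            + ∫⁻ γ in Ioi (0:ℝ), μ {p | u p ≤ γ ∧ γ < v p} := by rw [lcu]
      _ = ∫⁻ γ in Ioi (0:ℝ), (μ {p | γ < u p} + μ {p | u p ≤ γ ∧ γ < v p}) :=
          (lintegral_add_left hmeasu _).symm
      _ = ∫⁻ γ in Ioi (0:ℝ), μ {p | γ < v p} := lintegral_congr fun γ => (hsplit γ).symm
      _ = ∫⁻ p, ENNReal.ofReal (v p) ∂μ := lcv.symm
      _ = (∫⁻ p, ENNReal.ofReal (u p) ∂μ) + ∫⁻ p, ENNReal.ofReal (v p - u p) ∂μ := hsum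
  have := (ENNReal.add_right_inj hBfin).mp main
  simp_rw [hrw]
  exact this

private lemma coarea_core {Ω : Type*} [MeasurableSpace Ω] (J : Measure Ω) {u v : Ω → ℝ}
    (hu : Measurable u) (hv : Measurable v) (hu0 : ∀ p, 0 ≤ u p) :
    ∫⁻ γ in Ioi (0:ℝ), J {p | u p ≤ γ ∧ γ < v p}
      = ∫⁻ p, ENNReal.ofReal (v p - u p) ∂J := by
  have hTmeas : ∀ γ : ℝ, MeasurableSet {p | u p ≤ γ ∧ γ < v p} := fun γ =>
    (hu measurableSet_Iic).inter (hv measurableSet_Ioi)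
  have hDmeas : MeasurableSet {p | u p < v p} := measurableSet_lt hu hv
  set C : ℕ → Set Ω := fun n => {p | 1/((n:ℝ)+1) < v p - u p ∧ u p < (n:ℝ)} with hC
  have hCmem : ∀ n p, p ∈ C n ↔ (1/((n:ℝ)+1) < v p - u p ∧ u p < (n:ℝ)) := by
    intro n p; rw [hC]; exact Iff.rfl
  have hCmeas : ∀ n, MeasurableSet (C n) := by
    intro n
    rw [hC]
    exact (measurableSet_lt measurable_const (hv.sub hu)).inter
      (measurableSet_lt hu measurable_const)
  have hCD : ⋃ n, C n = {p | u p < v p} := by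
    apply subset_antisymm
    · refine iUnion_subset fun n p hp => ?_
      have hp' := (hCmem n p).mp hp
      have hpos : (0:ℝ) < 1/((n:ℝ)+1) := by positivity
      exact sub_pos.mp (lt_trans hpos hp'.1)
    · intro p hp
      have hvu : 0 < v p - u p := sub_pos.mpr hp
      obtain ⟨n, hn⟩ := exists_nat_gt (max (u p) (1 / (v p - u p)))
      refine mem_iUnion.mpr ⟨n, (hCmem n p).mpr ⟨?_, (le_max_left _ _).trans_lt hn⟩⟩
      have h1 : 1 / (v p - u p) < (n:ℝ) := (le_max_right _ _).trans_lt hn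
      have hn0 : (0:ℝ) < n := lt_trans (by positivity) h1
      have h2 : 1 < (n:ℝ) * (v p - u p) := by
        have := (div_lt_iff₀ hvu).mp h1
        linarith
      have h3 : 1/(n:ℝ) < v p - u p := (div_lt_iff₀ hn0).mpr (by linarith)
      calc 1/((n:ℝ)+1) ≤ 1/(n:ℝ) := by
            apply one_div_le_one_div_of_le hn0
            linarith
        _ < v p - u p := h3
  by_cases hfin : ∀ n, J (C n) ≠ ⊤
  · -- all pieces have finite measure
    have hPmeas : ∀ n, MeasurableSet (disjointed C n) := MeasurableSet.disjointed hCmeas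
    have hPdisj : Pairwise (Function.onFun Disjoint (disjointed C)) := disjoint_disjointed C
    have hPsub : ∀ n, disjointed C n ⊆ C n := disjointed_subset C
    have hPfin : ∀ n, J (disjointed C n) ≠ ⊤ :=
      fun n => ne_top_of_le_ne_top (hfin n) (measure_mono (hPsub n))
    have hPU : ⋃ n, disjointed C n = {p | u p < v p} := by
      rw [iUnion_disjointed]; exact hCD
    have hTsubD : ∀ γ : ℝ, {p | u p ≤ γ ∧ γ < v p} ⊆ {p | u p < v p} :=
      fun γ p hp => lt_of_le_of_lt hp.1 hp.2
    calc ∫⁻ γ in Ioi (0:ℝ), J {p | u p ≤ γ ∧ γ < v p}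
        = ∫⁻ γ in Ioi (0:ℝ), ∑' n, J ({p | u p ≤ γ ∧ γ < v p} ∩ disjointed C n) := by
          refine lintegral_congr fun γ => ?_
          have e : {p | u p ≤ γ ∧ γ < v p}
              = ⋃ n, ({p | u p ≤ γ ∧ γ < v p} ∩ disjointed C n) := by
            rw [← inter_iUnion, hPU, inter_eq_self_of_subset_left (hTsubD γ)]
          conv_lhs => rw [e]
          exact measure_iUnion
            (fun m k hmk => (hPdisj hmk).mono inter_subset_right inter_subset_right)
            (fun n => (hTmeas γ).inter (hPmeas n))
      _ = ∑' n, ∫⁻ γ in Ioi (0:ℝ), J ({p | u p ≤ γ ∧ γ < v p} ∩ disjointed C n) :=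
          lintegral_tsum fun n =>
            (sect_measurable J hu hv (hPmeas n) (hPfin n)).aemeasurable
      _ = ∑' n, ∫⁻ p in disjointed C n, ENNReal.ofReal (v p - u p) ∂J := by
          refine tsum_congr fun n => ?_
          refine piece_eq J hu hv hu0 (hPmeas n) (fun p hp => ?_) (hPfin n) (n:ℝ)
            (fun p hp => (((hCmem n p).mp (hPsub n hp)).2).le)
          have hp' := (hCmem n p).mp (hPsub n hp)
          have hpos : (0:ℝ) < 1/((n:ℝ)+1) := by positivity
          exact sub_pos.mp (lt_trans hpos hp'.1)
      _ = ∫⁻ p in ⋃ n, disjointed C n, ENNReal.ofReal (v p - u p) ∂J :=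
          (lintegral_iUnion hPmeas hPdisj _).symm
      _ = ∫⁻ p in {p | u p < v p}, ENNReal.ofReal (v p - u p) ∂J := by rw [hPU]
      _ = ∫⁻ p, ENNReal.ofReal (v p - u p) ∂J := by
          rw [← lintegral_indicator hDmeas]
          refine lintegral_congr fun p => ?_
          by_cases hp : p ∈ {p | u p < v p}
          · rw [indicator_of_mem hp]
          · rw [indicator_of_notMem hp]
            have hle : v p - u p ≤ 0 := sub_nonpos.mpr (not_lt.mp hp)
            exact (ENNReal.ofReal_eq_zero.mpr hle).symm
  · -- some piece has infinite measure
    push_neg at hfin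
    obtain ⟨n, hn⟩ := hfin
    set w : ℝ := 1/(2*((n:ℝ)+1)) with hw
    have hwpos : 0 < w := by rw [hw]; positivity
    have h2w : (1:ℝ)/((n:ℝ)+1) = 2*w := by
      rw [hw]
      field_simp
    set KK : ℕ := 2*(n+1)*(n+1) with hKK
    have hKw : (KK:ℝ) * w = (n:ℝ) + 1 := by
      have hc : (KK:ℝ) = 2*((n:ℝ)+1)*((n:ℝ)+1) := by rw [hKK]; push_cast; ring
      rw [hc, hw]
      field_simp
    set B : ℕ → Set Ω := fun k => C n ∩ {p | (k:ℝ)*w ≤ u p ∧ u p < ((k:ℝ)+1)*w} with hB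
    have hBmeas : ∀ k, MeasurableSet (B k) := by
      intro k
      rw [hB]
      exact (hCmeas n).inter
        ((measurableSet_le measurable_const hu).inter (measurableSet_lt hu measurable_const))
    have hcover : C n ⊆ ⋃ k ∈ Finset.range KK, B k := by
      intro p hp
      have hp' := (hCmem n p).mp hp
      have hu0p := hu0 p
      have hk1 : (⌊u p / w⌋₊ : ℝ) ≤ u p / w := Nat.floor_le (by positivity)
      have hk2 : u p / w < (⌊u p / w⌋₊ : ℝ) + 1 := Nat.lt_floor_add_one _
      have hkw : (⌊u p / w⌋₊ : ℝ) * w ≤ u p := (le_div_iff₀ hwpos).mp hk1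
      have hkw2 : u p < ((⌊u p / w⌋₊ : ℝ) + 1) * w := (div_lt_iff₀ hwpos).mp hk2
      have hkK : ⌊u p / w⌋₊ < KK := by
        refine (Nat.floor_lt (by positivity)).mpr ?_
        rw [div_lt_iff₀ hwpos]
        calc u p < (n:ℝ) := hp'.2
          _ < (n:ℝ) + 1 := by linarith
          _ = (KK:ℝ) * w := hKw.symm
      refine mem_iUnion₂.mpr ⟨⌊u p / w⌋₊, Finset.mem_range.mpr hkK, ?_⟩
      rw [hB]
      exact ⟨hp, hkw, hkw2⟩
    have hex : ∃ k, J (B k) = ⊤ := by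
      by_contra hall
      push_neg at hall
      have hlt : J (C n) < ⊤ := by
        refine lt_of_le_of_lt ((measure_mono hcover).trans (measure_biUnion_finset_le _ _)) ?_
        exact ENNReal.sum_lt_top.mpr fun k _ => lt_top_iff_ne_top.mpr (hall k)
      exact absurd hn hlt.ne
    obtain ⟨k, hk⟩ := hex
    have hBprop : ∀ p ∈ B k, (2*w < v p - u p ∧ u p < (n:ℝ))
        ∧ ((k:ℝ)*w ≤ u p ∧ u p < ((k:ℝ)+1)*w) := by
      intro p hp
      rw [hB] at hp
      refine ⟨⟨?_, ((hCmem n p).mp hp.1).2⟩, hp.2⟩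
      have := ((hCmem n p).mp hp.1).1
      rw [h2w] at this
      exact this
    have hRHS : ∫⁻ p, ENNReal.ofReal (v p - u p) ∂J = ⊤ := by
      have h1 : ENNReal.ofReal (2*w) * J (B k) ≤ ∫⁻ p, ENNReal.ofReal (v p - u p) ∂J := by
        calc ENNReal.ofReal (2*w) * J (B k)
            = ∫⁻ _ in B k, ENNReal.ofReal (2*w) ∂J := (setLIntegral_const _ _).symm
          _ ≤ ∫⁻ p in B k, ENNReal.ofReal (v p - u p) ∂J := by
              refine lintegral_mono_ae ?_
              filter_upwards [ae_restrict_mem (hBmeas k)] with p hp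
              exact ENNReal.ofReal_le_ofReal (hBprop p hp).1.1.le
          _ ≤ ∫⁻ p, ENNReal.ofReal (v p - u p) ∂J := setLIntegral_le_lintegral _ _
      rw [hk, ENNReal.mul_top (by
        simp only [ne_eq, ENNReal.ofReal_eq_zero, not_le]
        linarith)] at h1
      exact top_le_iff.mp h1
    have hLHS : ∫⁻ γ in Ioi (0:ℝ), J {p | u p ≤ γ ∧ γ < v p} = ⊤ := by
      have hsub : Ioo ((k:ℝ)*w + w) ((k:ℝ)*w + 2*w) ⊆ Ioi (0:ℝ) := by
        intro γ hγ
        have h0 : (0:ℝ) < (k:ℝ)*w + w :=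
          add_pos_of_nonneg_of_pos (mul_nonneg (Nat.cast_nonneg k) hwpos.le) hwpos
        exact lt_trans h0 hγ.1
      have hTsup : ∀ γ ∈ Ioo ((k:ℝ)*w + w) ((k:ℝ)*w + 2*w),
          J {p | u p ≤ γ ∧ γ < v p} = ⊤ := by
        intro γ hγ
        refine eq_top_iff.mpr (le_trans hk.symm.le (measure_mono ?_))
        intro p hp
        obtain ⟨⟨hvu, _⟩, ⟨hkl, hkr⟩⟩ := hBprop p hp
        have hkr' : u p < (k:ℝ)*w + w := by
          have : ((k:ℝ)+1)*w = (k:ℝ)*w + w := by ring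
          linarith [hkr, this.le]
        constructor
        · exact (hkr'.trans hγ.1).le
        · have : γ < (k:ℝ)*w + 2*w := hγ.2
          linarith
      have h3 : ∫⁻ γ in Ioo ((k:ℝ)*w + w) ((k:ℝ)*w + 2*w), (⊤:ℝ≥0∞) = ⊤ := by
        rw [setLIntegral_const, Real.volume_Ioo]
        have : (k:ℝ)*w + 2*w - ((k:ℝ)*w + w) = w := by ring
        rw [this]
        exact ENNReal.top_mul (by
          simp only [ne_eq, ENNReal.ofReal_eq_zero, not_le]
          exact hwpos)
      have h2 : ∫⁻ γ in Ioo ((k:ℝ)*w + w) ((k:ℝ)*w + 2*w), (⊤:ℝ≥0∞)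
          ≤ ∫⁻ γ in Ioo ((k:ℝ)*w + w) ((k:ℝ)*w + 2*w), J {p | u p ≤ γ ∧ γ < v p} := by
        refine lintegral_mono_ae ?_
        filter_upwards [ae_restrict_mem measurableSet_Ioo] with γ hγ
        exact le_of_eq (hTsup γ hγ).symm
      have h4 : ∫⁻ γ in Ioo ((k:ℝ)*w + w) ((k:ℝ)*w + 2*w), J {p | u p ≤ γ ∧ γ < v p}
          ≤ ∫⁻ γ in Ioi (0:ℝ), J {p | u p ≤ γ ∧ γ < v p} :=
        lintegral_mono' (Measure.restrict_mono hsub le_rfl) le_rfl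
      exact top_le_iff.mp ((h3 ▸ h2).trans h4)
    rw [hLHS, hRHS]

/-- Coarea formula for symmetric forms, and the resulting Cheeger lower bound:
for `f ≥ 0` with `π(f) = 1`,
`(1/2)∬ |f(y)−f(x)| dJ + ∫ f dK = ∫₀^∞ [J(A_γ × A_γᶜ) + K(A_γ)] dγ ≥ h`,
where `A_γ = {f > γ}` and `h` is the Cheeger constant. -/
theorem stmt5 {E : Type*} [MeasurableSpace E] (π : Measure E) [IsProbabilityMeasure π]
    (J : Measure (E × E)) (hsym : Measure.map Prod.swap J = J)
    (hdiag : J {p : E × E | p.1 = p.2} = 0)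
    (K : Measure E)
    (h : ℝ≥0∞)
    (hh : h = ⨅ A ∈ {A : Set E | MeasurableSet A ∧ π A ≠ 0},
        (J (A ×ˢ Aᶜ) + K A) / π A)
    (f : E → ℝ) (hf : Measurable f) (hfnn : ∀ x, 0 ≤ f x)
    (hfint : ∫ x, f x ∂π = 1) :
    ((1 / 2 : ℝ≥0∞) * (∫⁻ p, ENNReal.ofReal |f p.2 - f p.1| ∂J)
        + ∫⁻ x, ENNReal.ofReal (f x) ∂K
      = ∫⁻ γ in Ioi (0 : ℝ),
          (J ({x | γ < f x} ×ˢ {x | γ < f x}ᶜ) + K {x | γ < f x})) ∧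
    h ≤ (1 / 2 : ℝ≥0∞) * (∫⁻ p, ENNReal.ofReal |f p.2 - f p.1| ∂J)
        + ∫⁻ x, ENNReal.ofReal (f x) ∂K := by
  -- swap symmetry
  have hswap : ∫⁻ p : E × E, ENNReal.ofReal (f p.2 - f p.1) ∂J
      = ∫⁻ p : E × E, ENNReal.ofReal (f p.1 - f p.2) ∂J := by
    have hm : Measurable fun p : E × E => ENNReal.ofReal (f p.2 - f p.1) :=
      ((hf.comp measurable_snd).sub (hf.comp measurable_fst)).ennreal_ofReal
    conv_lhs => rw [← hsym]
    rw [lintegral_map hm measurable_swap]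
    simp only [Prod.snd_swap, Prod.fst_swap]
  have hhalf : (1 / 2 : ℝ≥0∞) * (∫⁻ p, ENNReal.ofReal |f p.2 - f p.1| ∂J)
      = ∫⁻ p : E × E, ENNReal.ofReal (f p.1 - f p.2) ∂J := by
    have habs : ∀ p : E × E, ENNReal.ofReal |f p.2 - f p.1|
        = ENNReal.ofReal (f p.1 - f p.2) + ENNReal.ofReal (f p.2 - f p.1) := by
      intro p
      rcases le_total (f p.2 - f p.1) 0 with hle | hle
      · rw [abs_of_nonpos hle, ENNReal.ofReal_eq_zero.mpr hle, add_zero, neg_sub]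
      · rw [abs_of_nonneg hle, ENNReal.ofReal_eq_zero.mpr (by linarith : f p.1 - f p.2 ≤ 0),
          zero_add]
    have hm1 : Measurable fun p : E × E => ENNReal.ofReal (f p.1 - f p.2) :=
      ((hf.comp measurable_fst).sub (hf.comp measurable_snd)).ennreal_ofReal
    rw [lintegral_congr habs, lintegral_add_left hm1, hswap, ← two_mul, ← mul_assoc,
      one_div, ENNReal.inv_mul_cancel two_ne_zero ENNReal.ofNat_ne_top, one_mul]
  have hcore : ∫⁻ γ in Ioi (0:ℝ), J {p : E × E | f p.2 ≤ γ ∧ γ < f p.1}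
      = ∫⁻ p : E × E, ENNReal.ofReal (f p.1 - f p.2) ∂J :=
    coarea_core J (hf.comp measurable_snd) (hf.comp measurable_fst) (fun p => hfnn _)
  have hK : ∫⁻ x, ENNReal.ofReal (f x) ∂K = ∫⁻ γ in Ioi (0:ℝ), K {x | γ < f x} :=
    lintegral_eq_lintegral_meas_lt K (ae_of_all _ hfnn) hf.aemeasurable
  have hKmeas : Measurable fun γ : ℝ => K {x | γ < f x} :=
    Antitone.measurable (fun a b hab => measure_mono fun x hx => lt_of_le_of_lt hab hx)
  have hset : ∀ γ : ℝ, ({x | γ < f x} ×ˢ {x | γ < f x}ᶜ) = {p : E × E | f p.2 ≤ γ ∧ γ < f p.1} := by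
    intro γ
    ext p
    simp only [mem_prod, mem_setOf_eq, mem_compl_iff, not_lt]
    exact and_comm
  have part1 : (1 / 2 : ℝ≥0∞) * (∫⁻ p, ENNReal.ofReal |f p.2 - f p.1| ∂J)
        + ∫⁻ x, ENNReal.ofReal (f x) ∂K
      = ∫⁻ γ in Ioi (0 : ℝ),
          (J ({x | γ < f x} ×ˢ {x | γ < f x}ᶜ) + K {x | γ < f x}) := by
    calc (1 / 2 : ℝ≥0∞) * (∫⁻ p, ENNReal.ofReal |f p.2 - f p.1| ∂J)
          + ∫⁻ x, ENNReal.ofReal (f x) ∂K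
        = (∫⁻ γ in Ioi (0:ℝ), J {p : E × E | f p.2 ≤ γ ∧ γ < f p.1})
            + ∫⁻ γ in Ioi (0:ℝ), K {x | γ < f x} := by rw [hhalf, ← hcore, hK]
      _ = ∫⁻ γ in Ioi (0:ℝ), (J {p : E × E | f p.2 ≤ γ ∧ γ < f p.1} + K {x | γ < f x}) :=
          (lintegral_add_right _ hKmeas).symm
      _ = ∫⁻ γ in Ioi (0 : ℝ),
            (J ({x | γ < f x} ×ˢ {x | γ < f x}ᶜ) + K {x | γ < f x}) := by
          refine lintegral_congr fun γ => ?_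
          rw [hset γ]
  refine ⟨part1, ?_⟩
  rw [part1]
  have hπmeas : Measurable fun γ : ℝ => π {x | γ < f x} :=
    Antitone.measurable (fun a b hab => measure_mono fun x hx => lt_of_le_of_lt hab hx)
  have hInt : Integrable f π := by
    by_contra hni
    rw [integral_undef hni] at hfint
    exact one_ne_zero hfint.symm
  have hone : ∫⁻ γ in Ioi (0:ℝ), π {x | γ < f x} = 1 := by
    rw [← lintegral_eq_lintegral_meas_lt π (ae_of_all _ hfnn) hf.aemeasurable,
      ← ofReal_integral_eq_lintegral_ofReal hInt (ae_of_all _ hfnn), hfint, ENNReal.ofReal_one]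
  have hpt : ∀ γ : ℝ, h * π {x | γ < f x}
      ≤ J ({x | γ < f x} ×ˢ {x | γ < f x}ᶜ) + K {x | γ < f x} := by
    intro γ
    by_cases hπ0 : π {x | γ < f x} = 0
    · rw [hπ0, mul_zero]
      exact zero_le
    · have hmem : {x | γ < f x} ∈ {A : Set E | MeasurableSet A ∧ π A ≠ 0} :=
        ⟨hf measurableSet_Ioi, hπ0⟩
      have hle : h ≤ (J ({x | γ < f x} ×ˢ {x | γ < f x}ᶜ) + K {x | γ < f x})
          / π {x | γ < f x} := by
        rw [hh]
        exact iInf₂_le _ hmem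
      exact (ENNReal.le_div_iff_mul_le (Or.inl hπ0) (Or.inl (measure_ne_top π _))).mp hle
  calc h = h * 1 := (mul_one h).symm
    _ = h * ∫⁻ γ in Ioi (0:ℝ), π {x | γ < f x} := by rw [hone]
    _ = ∫⁻ γ in Ioi (0:ℝ), h * π {x | γ < f x} := (lintegral_const_mul h hπmeas).symm
    _ ≤ ∫⁻ γ in Ioi (0 : ℝ),
          (J ({x | γ < f x} ×ˢ {x | γ < f x}ᶜ) + K {x | γ < f x}) :=
        lintegral_mono fun γ => hpt γ
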